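/- Every metric space is standard as a quasi-metric space, every Yoneda-complete quasi-metric space is standard, and every poset with the quasi-metric d_≤ is standard. -/

import Mathlib

open scoped ENNReal NNReal Classical

/-- A formal ball: a point together with a non-negative real radius. -/
structure FormalBall (X : Type*) where
  center : X
  radius : ℝ≥0

/-- A quasi-metric on `X`: a `[0,∞]`-valued distance with `d x x = 0`, the triangle
inequality, and `d x y = d y x = 0 → x = y`. -/
structure QuasiMetric (X : Type*) where
  d : X → X → ℝ≥0∞
  refl : ∀ x, d x x = 0
  triangle : ∀ x y z, d x z ≤ d x y + d y z
  separated : ∀ x y, d x y = 0 → d y x = 0 → x = y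

/-- The order on formal balls: `(x,r) ≤ (y,s)` iff `d x y ≤ r - s`
(equivalently `s ≤ r` and `d x y ≤ r - s`). -/
def ballLE {X : Type*} (q : QuasiMetric X) (b c : FormalBall X) : Prop :=
  c.radius ≤ b.radius ∧ q.d b.center c.center ≤ ↑(b.radius - c.radius)

/-- The partial order of formal balls `B(X,d)`. -/
def ballOrder {X : Type*} (q : QuasiMetric X) : PartialOrder (FormalBall X) where
  le := ballLE q
  le_refl b := ⟨le_rfl, by simp [ballLE, q.refl]⟩
  le_trans a b c hab hbc := ⟨hbc.1.trans hab.1, by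
    calc q.d a.center c.center ≤ q.d a.center b.center + q.d b.center c.center :=
          q.triangle _ _ _
      _ ≤ ↑(a.radius - b.radius) + ↑(b.radius - c.radius) := add_le_add hab.2 hbc.2
      _ = ↑(a.radius - c.radius) := by
          rw [← ENNReal.coe_add, tsub_add_tsub_cancel hab.1 hbc.1]⟩
  le_antisymm a b hab hba := by
    have hr : b.radius = a.radius := le_antisymm hab.1 hba.1
    have h1 : q.d a.center b.center = 0 := le_antisymm (by simpa [hr] using hab.2) bot_le
    have h2 : q.d b.center a.center = 0 := le_antisymm (by simpa [hr] using hba.2) bot_le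
    have hc := q.separated _ _ h1 h2
    cases a; cases b; simp_all

/-- A dcpo: every nonempty directed subset has a least upper bound. -/
def IsDcpo (α : Type*) [Preorder α] : Prop :=
  ∀ S : Set α, S.Nonempty → DirectedOn (· ≤ ·) S → ∃ a, IsLUB S a

/-- Yoneda-completeness: the poset of formal balls is a dcpo. -/
def YonedaComplete {X : Type*} (q : QuasiMetric X) : Prop :=
  letI := ballOrder q
  IsDcpo (FormalBall X)

/-- Standardness: a directed family of formal balls has a supremum iff the family with all
radii uniformly shifted by `s` has one. -/
def Standard {X : Type*} (q : QuasiMetric X) : Prop :=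
  letI := ballOrder q
  ∀ S : Set (FormalBall X), S.Nonempty → DirectedOn (· ≤ ·) S → ∀ s : ℝ≥0,
    ((∃ b, IsLUB S b) ↔
      ∃ b, IsLUB ((fun c : FormalBall X => FormalBall.mk c.center (c.radius + s)) '' S) b)

/-- The quasi-metric `d_≤` on a poset: `0` if `x ≤ y`, `∞` otherwise. -/
noncomputable def dle (X : Type*) [PartialOrder X] : QuasiMetric X where
  d x y := if x ≤ y then 0 else ⊤
  refl x := by simp
  triangle x y z := by
    by_cases hxy : x ≤ y
    · by_cases hyz : y ≤ z
      · simp [hxy, hyz, hxy.trans hyz]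
      · simp [hxy, hyz]
    · simp [hxy]
  separated x y h1 h2 := by
    by_cases hxy : x ≤ y
    · by_cases hyx : y ≤ x
      · exact le_antisymm hxy hyx
      · simp [hyx] at h2
    · simp [hxy] at h1

/-- The quasi-metric induced by a metric space via `edist`. -/
def metricQM (X : Type*) [MetricSpace X] : QuasiMetric X where
  d := edist
  refl := edist_self
  triangle := edist_triangle
  separated x y h1 _ := edist_eq_zero.mp h1

-- ===== auxiliary lemmas =====
section Aux

variable {X : Type*}

lemma ballLE_iff (q : QuasiMetric X) (b c : FormalBall X) :
    ballLE q b c ↔ q.d b.center c.center + (c.radius : ℝ≥0∞) ≤ (b.radius : ℝ≥0∞) := by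
  constructor
  · rintro ⟨h1, h2⟩
    calc q.d b.center c.center + (c.radius : ℝ≥0∞)
        ≤ (↑(b.radius - c.radius) + (c.radius : ℝ≥0∞)) := add_le_add_left h2 _
      _ = (b.radius : ℝ≥0∞) := by rw [← ENNReal.coe_add, tsub_add_cancel_of_le h1]
  · intro h
    have h1 : c.radius ≤ b.radius := by exact_mod_cast le_trans le_add_self h
    refine ⟨h1, ?_⟩
    rw [ENNReal.coe_sub]
    exact ENNReal.le_sub_of_add_le_right ENNReal.coe_ne_top h

/-- The radius-shift map. -/
def shiftB (s : ℝ≥0) (c : FormalBall X) : FormalBall X := ⟨c.center, c.radius + s⟩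

lemma shift_mono (q : QuasiMetric X) (s : ℝ≥0) {b c : FormalBall X} (h : ballLE q b c) :
    ballLE q (shiftB s b) (shiftB s c) := by
  rw [ballLE_iff] at h ⊢
  show q.d b.center c.center + ((c.radius + s : ℝ≥0) : ℝ≥0∞) ≤ ((b.radius + s : ℝ≥0) : ℝ≥0∞)
  push_cast
  rw [← add_assoc]
  exact add_le_add_left h _

lemma shift_reflect (q : QuasiMetric X) (s : ℝ≥0) {b c : FormalBall X}
    (h : ballLE q (shiftB s b) (shiftB s c)) : ballLE q b c := by
  rw [ballLE_iff] at h ⊢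
  have h' : q.d b.center c.center + ((c.radius + s : ℝ≥0) : ℝ≥0∞) ≤ ((b.radius + s : ℝ≥0) : ℝ≥0∞) := h
  rw [ENNReal.coe_add, ENNReal.coe_add, ← add_assoc] at h'
  exact (ENNReal.add_le_add_iff_right ENNReal.coe_ne_top).mp h'

lemma isLUB_ball_iff (q : QuasiMetric X) (S : Set (FormalBall X)) (b : FormalBall X) :
    (letI := ballOrder q; IsLUB S b) ↔
      ((∀ c ∈ S, ballLE q c b) ∧ ∀ b', (∀ c ∈ S, ballLE q c b') → ballLE q b b') :=
  Iff.rfl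

lemma directed_shift (q : QuasiMetric X) (s : ℝ≥0) {S : Set (FormalBall X)}
    (hdir : DirectedOn (ballLE q) S) :
    DirectedOn (ballLE q) ((fun c : FormalBall X => FormalBall.mk c.center (c.radius + s)) '' S) := by
  rintro _ ⟨a, ha, rfl⟩ _ ⟨b, hb, rfl⟩
  obtain ⟨c, hc, hac, hbc⟩ := hdir a ha b hb
  exact ⟨_, ⟨c, hc, rfl⟩, shift_mono q s hac, shift_mono q s hbc⟩

lemma sInf_image_add (A : Set ℝ≥0) (hne : A.Nonempty) (s : ℝ≥0) :
    sInf ((fun r => r + s) '' A) = sInf A + s := by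
  apply le_antisymm
  · rw [← tsub_le_iff_right]
    apply le_csInf hne
    intro a ha
    rw [tsub_le_iff_right]
    exact csInf_le (OrderBot.bddBelow _) ⟨a, ha, rfl⟩
  · apply le_csInf (hne.image _)
    rintro _ ⟨a, ha, rfl⟩
    exact add_le_add_left (csInf_le (OrderBot.bddBelow _) ha) s

end Aux

-- ===== metric space part =====
section MetricPart

variable {X : Type*} [MetricSpace X]

lemma metricQM_d (a b : X) : (metricQM X).d a b = edist a b := rfl

/-- If `x` is a least upper bound of a directed nonempty family of formal balls over a metric
space, then its radius is the infimum of the radii. -/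
lemma metric_radius_eq {S : Set (FormalBall X)}
    (hne : S.Nonempty) (hdir : DirectedOn (ballLE (metricQM X)) S) {x : FormalBall X}
    (hub : ∀ c ∈ S, ballLE (metricQM X) c x)
    (hleast : ∀ b, (∀ c ∈ S, ballLE (metricQM X) c b) → ballLE (metricQM X) x b) :
    x.radius = sInf (FormalBall.radius '' S) := by
  set r' := sInf (FormalBall.radius '' S) with hr'
  have hbelow : ∀ c ∈ S, r' ≤ c.radius :=
    fun c hc => csInf_le (OrderBot.bddBelow _) ⟨c, hc, rfl⟩
  have hxle : x.radius ≤ r' := by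
    apply le_csInf (hne.image _)
    rintro _ ⟨c, hc, rfl⟩
    exact (hub c hc).1
  refine le_antisymm hxle ?_
  refine le_of_forall_pos_le_add fun ε hε => ?_
  by_cases hcase : r' ≤ ε
  · exact hcase.trans (le_add_left le_rfl)
  push_neg at hcase
  -- ε < r'; pick cj with radius < r' + ε
  obtain ⟨m, hmim, hm⟩ := exists_lt_of_csInf_lt (hne.image FormalBall.radius)
    (show sInf (FormalBall.radius '' S) < r' + ε by
      rw [← hr']; exact lt_add_of_pos_right _ hε)
  obtain ⟨cj, hcj, rfl⟩ := hmim
  have hj2 : cj.radius < 2 * r' := by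
    calc cj.radius < r' + ε := hm
      _ ≤ r' + r' := add_le_add_right hcase.le _
      _ = 2 * r' := (two_mul r').symm
  -- the auxiliary upper bound
  set bj : FormalBall X := ⟨cj.center, 2 * r' - cj.radius⟩ with hbj
  have hubj : ∀ c ∈ S, ballLE (metricQM X) c bj := by
    intro ci hci
    rw [ballLE_iff, metricQM_d]
    obtain ⟨ck, hck, hik, hjk⟩ := hdir ci hci cj hcj
    rw [ballLE_iff, metricQM_d] at hik hjk
    have hrk : (r' : ℝ≥0∞) ≤ (ck.radius : ℝ≥0∞) := by exact_mod_cast hbelow ck hck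
    have hjk' : edist ck.center cj.center ≤ (cj.radius : ℝ≥0∞) - (ck.radius : ℝ≥0∞) := by
      rw [edist_comm]
      exact ENNReal.le_sub_of_add_le_right ENNReal.coe_ne_top hjk
    have hkj : (ck.radius : ℝ≥0∞) ≤ (cj.radius : ℝ≥0∞) := le_trans le_add_self hjk
    have hj2k : (cj.radius : ℝ≥0∞) ≤ 2 * (ck.radius : ℝ≥0∞) := by
      calc (cj.radius : ℝ≥0∞) ≤ 2 * (r' : ℝ≥0∞) := by exact_mod_cast hj2.le
        _ ≤ 2 * (ck.radius : ℝ≥0∞) := by exact mul_le_mul_right hrk 2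
    calc edist ci.center cj.center + ((2 * r' - cj.radius : ℝ≥0) : ℝ≥0∞)
        ≤ (edist ci.center ck.center + edist ck.center cj.center)
            + (2 * (r' : ℝ≥0∞) - (cj.radius : ℝ≥0∞)) := by
          rw [ENNReal.coe_sub]
          push_cast
          exact add_le_add_left (edist_triangle _ _ _) _
      _ ≤ (edist ci.center ck.center + ((cj.radius : ℝ≥0∞) - (ck.radius : ℝ≥0∞)))
            + (2 * (ck.radius : ℝ≥0∞) - (cj.radius : ℝ≥0∞)) := by
          refine add_le_add (add_le_add_right hjk' _) ?_
          exact tsub_le_tsub_right (mul_le_mul_right hrk 2) _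
      _ = edist ci.center ck.center
            + (((cj.radius : ℝ≥0∞) - (ck.radius : ℝ≥0∞))
              + (2 * (ck.radius : ℝ≥0∞) - (cj.radius : ℝ≥0∞))) := by
          rw [add_assoc]
      _ = edist ci.center ck.center + (ck.radius : ℝ≥0∞) := by
          congr 1
          rw [add_comm, tsub_add_tsub_cancel hj2k hkj, two_mul,
            ENNReal.add_sub_cancel_right ENNReal.coe_ne_top]
      _ ≤ (ci.radius : ℝ≥0∞) := hik
  have hxbj := hleast bj hubj
  have h1 : 2 * r' - cj.radius ≤ x.radius := hxbj.1
  have h2 : r' - ε ≤ x.radius := by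
    calc r' - ε = 2 * r' - (r' + ε) := by
          rw [two_mul, add_tsub_add_eq_tsub_left]
      _ ≤ 2 * r' - cj.radius := tsub_le_tsub_left hm.le _
      _ ≤ x.radius := h1
  exact tsub_le_iff_right.mp h2

end MetricPart

section MetricStandard

variable {X : Type*} [MetricSpace X]

lemma metric_standard : Standard (metricQM X) := by
  intro S hne hdir s
  have hdir' : DirectedOn (ballLE (metricQM X)) S := hdir
  set sh := fun c : FormalBall X => FormalBall.mk c.center (c.radius + s) with hsh
  have hTne : (sh '' S).Nonempty := hne.image _
  have hTdir : DirectedOn (ballLE (metricQM X)) (sh '' S) := directed_shift _ s hdir'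
  have hradT : FormalBall.radius '' (sh '' S) = (fun r => r + s) '' (FormalBall.radius '' S) := by
    rw [Set.image_image, Set.image_image]
  constructor
  · rintro ⟨x, hx⟩
    rw [isLUB_ball_iff] at hx
    obtain ⟨hub, hleast⟩ := hx
    have hr : x.radius = sInf (FormalBall.radius '' S) := metric_radius_eq hne hdir' hub hleast
    refine ⟨⟨x.center, x.radius + s⟩, (isLUB_ball_iff _ _ _).mpr ⟨?_, ?_⟩⟩
    · rintro _ ⟨c, hc, rfl⟩
      exact shift_mono _ s (hub c hc)
    · intro b hb
      rw [ballLE_iff, metricQM_d]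
      show edist x.center b.center + (b.radius : ℝ≥0∞) ≤ ((x.radius + s : ℝ≥0) : ℝ≥0∞)
      refine ENNReal.le_of_forall_pos_le_add fun ε hε _ => ?_
      have hhalf : (0 : ℝ≥0) < ε / 2 := by positivity
      obtain ⟨m, hmim, hm⟩ := exists_lt_of_csInf_lt (hne.image FormalBall.radius)
        (show sInf (FormalBall.radius '' S) < x.radius + ε / 2 by
          rw [← hr]; exact lt_add_of_pos_right _ hhalf)
      obtain ⟨ci, hci, rfl⟩ := hmim
      have h1 : edist ci.center x.center + (x.radius : ℝ≥0∞) ≤ (ci.radius : ℝ≥0∞) := by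
        have := (ballLE_iff _ _ _).mp (hub ci hci); rwa [metricQM_d] at this
      have h2 : edist ci.center x.center ≤ ((ε / 2 : ℝ≥0) : ℝ≥0∞) := by
        have hle : edist ci.center x.center + (x.radius : ℝ≥0∞)
            ≤ ((ε / 2 : ℝ≥0) : ℝ≥0∞) + (x.radius : ℝ≥0∞) := by
          refine h1.trans ?_
          rw [add_comm]
          exact_mod_cast hm.le
        exact (ENNReal.add_le_add_iff_right ENNReal.coe_ne_top).mp hle
      have h3 : edist ci.center b.center + (b.radius : ℝ≥0∞)
          ≤ ((ci.radius + s : ℝ≥0) : ℝ≥0∞) := by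
        have := (ballLE_iff _ _ _).mp (hb (sh ci) ⟨ci, hci, rfl⟩)
        rwa [metricQM_d] at this
      calc edist x.center b.center + (b.radius : ℝ≥0∞)
          ≤ edist x.center ci.center + (edist ci.center b.center + (b.radius : ℝ≥0∞)) := by
            rw [← add_assoc]
            exact add_le_add_left (edist_triangle _ _ _) _
        _ ≤ ((ε / 2 : ℝ≥0) : ℝ≥0∞) + ((ci.radius + s : ℝ≥0) : ℝ≥0∞) := by
            refine add_le_add ?_ h3
            rwa [edist_comm]
        _ ≤ ((ε / 2 : ℝ≥0) : ℝ≥0∞) + (((x.radius + ε / 2 + s : ℝ≥0)) : ℝ≥0∞) := by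
            refine add_le_add_right ?_ _
            exact_mod_cast add_le_add_left hm.le s
        _ = ((x.radius + s : ℝ≥0) : ℝ≥0∞) + (ε : ℝ≥0∞) := by
            have hh : ((ε/2 : ℝ≥0) : ℝ≥0∞) + ((ε/2 : ℝ≥0) : ℝ≥0∞) = (ε : ℝ≥0∞) := by
              rw [← ENNReal.coe_add, add_halves]
            rw [← hh]
            simp only [← ENNReal.coe_add]
            rw [ENNReal.coe_inj]
            ring
  · rintro ⟨y, hy⟩
    rw [isLUB_ball_iff] at hy
    obtain ⟨hubT, hleastT⟩ := hy
    set r' := sInf (FormalBall.radius '' S) with hr'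
    have hyr : y.radius = r' + s := by
      have := metric_radius_eq hTne hTdir hubT hleastT
      rwa [hradT, sInf_image_add _ (hne.image _) s, ← hr'] at this
    refine ⟨⟨y.center, r'⟩, (isLUB_ball_iff _ _ _).mpr ⟨?_, ?_⟩⟩
    · intro c hc
      have h := (ballLE_iff _ _ _).mp (hubT (sh c) ⟨c, hc, rfl⟩)
      rw [metricQM_d, hyr] at h
      rw [ballLE_iff, metricQM_d]
      show edist c.center y.center + (r' : ℝ≥0∞) ≤ (c.radius : ℝ≥0∞)
      have h' : (edist c.center y.center + (r' : ℝ≥0∞)) + (s : ℝ≥0∞)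
          ≤ (c.radius : ℝ≥0∞) + (s : ℝ≥0∞) := by
        calc (edist c.center y.center + (r' : ℝ≥0∞)) + (s : ℝ≥0∞)
            = edist c.center y.center + ((r' + s : ℝ≥0) : ℝ≥0∞) := by push_cast; ring
          _ ≤ ((c.radius + s : ℝ≥0) : ℝ≥0∞) := h
          _ = (c.radius : ℝ≥0∞) + (s : ℝ≥0∞) := by push_cast; ring
      exact (ENNReal.add_le_add_iff_right ENNReal.coe_ne_top).mp h'
    · intro b hb
      have hbT : ∀ t ∈ sh '' S, ballLE (metricQM X) t (sh b) := by
        rintro _ ⟨c, hc, rfl⟩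
        exact shift_mono _ s (hb c hc)
      have h := (ballLE_iff _ _ _).mp (hleastT (sh b) hbT)
      rw [metricQM_d, hyr] at h
      rw [ballLE_iff, metricQM_d]
      show edist y.center b.center + (b.radius : ℝ≥0∞) ≤ (r' : ℝ≥0∞)
      have h' : (edist y.center b.center + (b.radius : ℝ≥0∞)) + (s : ℝ≥0∞)
          ≤ (r' : ℝ≥0∞) + (s : ℝ≥0∞) := by
        calc (edist y.center b.center + (b.radius : ℝ≥0∞)) + (s : ℝ≥0∞)
            = edist y.center b.center + ((b.radius + s : ℝ≥0) : ℝ≥0∞) := by push_cast; ring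
          _ ≤ ((r' + s : ℝ≥0) : ℝ≥0∞) := h
          _ = (r' : ℝ≥0∞) + (s : ℝ≥0∞) := by push_cast; ring
      exact (ENNReal.add_le_add_iff_right ENNReal.coe_ne_top).mp h'

end MetricStandard

-- ===== poset part =====
section PosetPart

variable {X : Type*} [PartialOrder X]

lemma ballLE_dle_iff (b c : FormalBall X) :
    ballLE (dle X) b c ↔ c.radius ≤ b.radius ∧ b.center ≤ c.center := by
  unfold ballLE
  constructor
  · rintro ⟨h1, h2⟩
    refine ⟨h1, ?_⟩
    by_contra h
    have : (dle X).d b.center c.center = ⊤ := by simp [dle, h]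
    rw [this, top_le_iff] at h2
    exact ENNReal.coe_ne_top h2
  · rintro ⟨h1, h2⟩
    refine ⟨h1, ?_⟩
    have : (dle X).d b.center c.center = 0 := by simp [dle, h2]
    rw [this]
    exact zero_le

lemma poset_exists_lub_iff (S : Set (FormalBall X)) (hne : S.Nonempty) :
    (∃ b, (∀ c ∈ S, ballLE (dle X) c b) ∧
      ∀ b', (∀ c ∈ S, ballLE (dle X) c b') → ballLE (dle X) b b')
      ↔ ∃ z, IsLUB (FormalBall.center '' S) z := by
  constructor
  · rintro ⟨b, hub, hleast⟩
    refine ⟨b.center, ?_, ?_⟩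
    · rintro _ ⟨c, hc, rfl⟩
      exact ((ballLE_dle_iff c b).mp (hub c hc)).2
    · intro z hz
      have hub' : ∀ c ∈ S, ballLE (dle X) c ⟨z, sInf (FormalBall.radius '' S)⟩ := by
        intro c hc
        rw [ballLE_dle_iff]
        exact ⟨csInf_le (OrderBot.bddBelow _) ⟨c, hc, rfl⟩, hz ⟨c, hc, rfl⟩⟩
      exact ((ballLE_dle_iff _ _).mp (hleast _ hub')).2
  · rintro ⟨z, hz⟩
    refine ⟨⟨z, sInf (FormalBall.radius '' S)⟩, ?_, ?_⟩
    · intro c hc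
      rw [ballLE_dle_iff]
      exact ⟨csInf_le (OrderBot.bddBelow _) ⟨c, hc, rfl⟩, hz.1 ⟨c, hc, rfl⟩⟩
    · intro b' hb'
      rw [ballLE_dle_iff]
      constructor
      · apply le_csInf (hne.image _)
        rintro _ ⟨c, hc, rfl⟩
        exact ((ballLE_dle_iff c b').mp (hb' c hc)).1
      · refine hz.2 ?_
        rintro _ ⟨c, hc, rfl⟩
        exact ((ballLE_dle_iff c b').mp (hb' c hc)).2

end PosetPart

/-- every metric space is standard, every Yoneda-complete quasi-metric
space is standard, and every poset (with `d_≤`) is standard. -/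
theorem standard_of_metric_yoneda_poset :
    (∀ (X : Type*) [MetricSpace X], Standard (metricQM X)) ∧
    (∀ (X : Type*) (q : QuasiMetric X), YonedaComplete q → Standard q) ∧
    (∀ (X : Type*) [PartialOrder X], Standard (dle X)) := by
  refine ⟨fun X _ => metric_standard, ?_, ?_⟩
  · intro X q hq S hne hdir s
    have hdir' : DirectedOn (ballLE q) S := hdir
    constructor
    · intro _
      exact hq _ (hne.image _) (directed_shift q s hdir')
    · intro _
      exact hq S hne hdir
  · intro X _ S hne hdir s
    set sh := fun c : FormalBall X => FormalBall.mk c.center (c.radius + s) with hsh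
    have hcent : FormalBall.center '' (sh '' S) = FormalBall.center '' S := by
      rw [Set.image_image]
    have h1 := poset_exists_lub_iff S hne
    have h2 := poset_exists_lub_iff (sh '' S) (hne.image _)
    rw [hcent] at h2
    constructor
    · rintro ⟨b, hb⟩
      obtain ⟨b', hub, hleast⟩ := h2.mpr (h1.mp ⟨b, (isLUB_ball_iff (dle X) S b).mp hb⟩)
      exact ⟨b', (isLUB_ball_iff (dle X) _ b').mpr ⟨hub, hleast⟩⟩
    · rintro ⟨b, hb⟩
      obtain ⟨b', hub, hleast⟩ := h1.mpr (h2.mp ⟨b, (isLUB_ball_iff (dle X) _ b).mp hb⟩)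
      exact ⟨b', (isLUB_ball_iff (dle X) S b').mpr ⟨hub, hleast⟩⟩
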